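/- arXiv:1909.02421 — 2 statements merged into one kernel-verified Lean document; each statement's English description precedes it below -/
import Mathlib

section
/- For every k ≥ 3, the k-swap game with k²−2 strategic agents of each of the k types, whose topology is the tree with root α, a set B of k(k−1)−1 children of α, and k leaf children attached to each node of B, admits no equilibrium assignment. -/
open Finset

namespace SwapGame

/-- Build a simple graph from a (not necessarily symmetric) boolean relation
by symmetrizing it and removing loops. -/
def mkGraph {V : Type*} (r : V → V → Bool) : SimpleGraph V where
  Adj a b := a ≠ b ∧ (r a b ∨ r b a)
  symm := ⟨fun a b h => ⟨Ne.symm h.1, Or.symm h.2⟩⟩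
  loopless := ⟨fun a h => h.1 rfl⟩

instance mkGraph.instDecidableRel {V : Type*} [DecidableEq V] (r : V → V → Bool) :
    DecidableRel (mkGraph r).Adj :=
  fun a b => inferInstanceAs (Decidable (a ≠ b ∧ (r a b ∨ r b a)))

variable {A V K : Type*} [Fintype V] [DecidableEq A] [DecidableEq V] [DecidableEq K]

/-- The assignment obtained from `σ` by swapping the locations of agents `i` and `j`. -/
def swapA (σ : A ≃ V) (i j : A) : A ≃ V := (Equiv.swap i j).trans σ

/-- The utility of agent `i` under assignment `σ`: the fraction of the neighbors of the
node of `i` that are occupied by agents of the same type (friends of `i`). -/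
def util (G : SimpleGraph V) [DecidableRel G.Adj] (c : A → K) (σ : A ≃ V) (i : A) : ℚ :=
  (((G.neighborFinset (σ i)).filter (fun w => c (σ.symm w) = c i)).card : ℚ) /
    ((G.neighborFinset (σ i)).card : ℚ)

/-- Agents `i` and `j` both strictly increase their utility by swapping their locations. -/
def improving (G : SimpleGraph V) [DecidableRel G.Adj] (c : A → K) (σ : A ≃ V)
    (i j : A) : Prop :=
  util G c σ i < util G c (swapA σ i j) i ∧ util G c σ j < util G c (swapA σ i j) j

/-- An assignment is an equilibrium if no pair of agents can both strictly increase
their utility by swapping positions. -/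
def isEquilibrium (G : SimpleGraph V) [DecidableRel G.Adj] (c : A → K) (σ : A ≃ V) : Prop :=
  ¬ ∃ i j : A, improving G c σ i j

/-- The social welfare of an assignment: the sum of the utilities of all agents. -/
def SW [Fintype A] (G : SimpleGraph V) [DecidableRel G.Adj] (c : A → K) (σ : A ≃ V) : ℚ :=
  ∑ i : A, util G c σ i

/-- Agent `i` is exposed: at least one neighbor is occupied by an agent of another type. -/
def exposed (G : SimpleGraph V) [DecidableRel G.Adj] (c : A → K) (σ : A ≃ V) (i : A) : Prop :=
  ((G.neighborFinset (σ i)).filter (fun w => c (σ.symm w) ≠ c i)).Nonempty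

instance exposed.instDecidable (G : SimpleGraph V) [DecidableRel G.Adj] (c : A → K)
    (σ : A ≃ V) : DecidablePred (exposed G c σ) :=
  fun _ => inferInstanceAs (Decidable (Finset.Nonempty _))

/-- The degree of integration of an assignment: the number of exposed agents. -/
def DI [Fintype A] (G : SimpleGraph V) [DecidableRel G.Adj] (c : A → K) (σ : A ≃ V) : ℕ :=
  (univ.filter (fun i : A => exposed G c σ i)).card

end SwapGame

namespace SwapGame

/-- The three-layer tree topology for `k`-swap games: a root, a set `B` of
`k(k-1)-1` middle nodes (children of the root), and `k` leaf children per middle node. -/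
inductive TV (k : ℕ) where
  | root : TV k
  | mid : Fin (k*(k-1)-1) → TV k
  | leaf : Fin (k*(k-1)-1) → Fin k → TV k
  deriving DecidableEq, Fintype

def adjT {k : ℕ} : TV k → TV k → Bool
  | .root, .mid _ => true
  | .mid i, .leaf j _ => i == j
  | _, _ => false

abbrev GT (k : ℕ) : SimpleGraph (TV k) := mkGraph (@adjT k)

/-- Agents: `k` types with `k^2 - 2` agents each; the type of an agent is its first
component. -/
abbrev AgT (k : ℕ) := Fin k × Fin (k^2 - 2)

end SwapGame

namespace SwapGame

set_option linter.unusedVariables false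
set_option linter.dupNamespace false

variable {k : ℕ}

lemma GT_adj {a b : TV k} : (GT k).Adj a b ↔ a ≠ b ∧ (adjT a b ∨ adjT b a) := Iff.rfl

lemma mid_injective (k : ℕ) : Function.Injective (TV.mid (k := k)) := by
  intro a b h; cases h; rfl

lemma leaf_injective (k : ℕ) (i : Fin (k*(k-1)-1)) : Function.Injective (TV.leaf (k := k) i) := by
  intro a b h; cases h; rfl

lemma nbr_leaf (i : Fin (k*(k-1)-1)) (j : Fin k) :
    (GT k).neighborFinset (TV.leaf i j) = {TV.mid i} := by
  ext w
  cases w <;> simp [SimpleGraph.mem_neighborFinset, GT_adj, adjT] <;>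
    aesop

lemma nbr_mid (i : Fin (k*(k-1)-1)) :
    (GT k).neighborFinset (TV.mid i) = insert TV.root (univ.image (TV.leaf i)) := by
  ext w
  cases w <;> simp [SimpleGraph.mem_neighborFinset, GT_adj, adjT] <;>
    aesop

lemma nbr_root :
    (GT k).neighborFinset (TV.root : TV k) = univ.image TV.mid := by
  ext w
  cases w <;> simp [SimpleGraph.mem_neighborFinset, GT_adj, adjT]

lemma card_nbr_leaf (i : Fin (k*(k-1)-1)) (j : Fin k) :
    ((GT k).neighborFinset (TV.leaf i j)).card = 1 := by
  rw [nbr_leaf]; simp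

lemma root_not_mem_image_leaf (i : Fin (k*(k-1)-1)) :
    (TV.root : TV k) ∉ univ.image (TV.leaf i) := by simp

lemma card_nbr_mid (i : Fin (k*(k-1)-1)) :
    ((GT k).neighborFinset (TV.mid i)).card = k + 1 := by
  rw [nbr_mid, card_insert_of_notMem (root_not_mem_image_leaf i),
    card_image_of_injective _ (leaf_injective k i)]
  simp [Nat.add_comm]

lemma card_nbr_root :
    ((GT k).neighborFinset (TV.root : TV k)).card = k*(k-1)-1 := by
  rw [nbr_root, card_image_of_injective _ (mid_injective k)]; simp

/-- occupant color of a node -/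
def colOf (σ : AgT k ≃ TV k) (v : TV k) : Fin k := (σ.symm v).1

lemma util_at_leaf (σ' : AgT k ≃ TV k) (x : AgT k) (i : Fin (k*(k-1)-1)) (j : Fin k)
    (hx : σ' x = TV.leaf i j) :
    util (GT k) Prod.fst σ' x = if colOf σ' (TV.mid i) = x.1 then 1 else 0 := by
  rw [util, hx, nbr_leaf, filter_singleton]
  by_cases h : colOf σ' (TV.mid i) = x.1
  · simp [colOf] at h
    simp [h, colOf]
  · simp [colOf] at h
    simp [h, colOf]

lemma util_at_mid (σ' : AgT k ≃ TV k) (x : AgT k) (i : Fin (k*(k-1)-1))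
    (hx : σ' x = TV.mid i) :
    util (GT k) Prod.fst σ' x =
      (((univ.filter fun j => colOf σ' (TV.leaf i j) = x.1).card
        + if colOf σ' TV.root = x.1 then 1 else 0 : ℕ) : ℚ) / (k+1) := by
  rw [util, hx, nbr_mid, card_insert_of_notMem (root_not_mem_image_leaf i),
    card_image_of_injective _ (leaf_injective k i), filter_insert]
  have himg : ((univ.image (TV.leaf i)).filter fun w => (σ'.symm w).1 = x.1).card
      = (univ.filter fun j => colOf σ' (TV.leaf i j) = x.1).card := by
    rw [Finset.filter_image, card_image_of_injective _ (leaf_injective k i)]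
    rfl
  by_cases h : colOf σ' TV.root = x.1
  · have h' : (σ'.symm TV.root).1 = x.1 := h
    rw [if_pos h', if_pos h, card_insert_of_notMem (by simp), himg]
    simp
  · have h' : ¬ (σ'.symm TV.root).1 = x.1 := h
    rw [if_neg h', if_neg h, himg]
    simp

lemma util_at_root (σ' : AgT k ≃ TV k) (x : AgT k) (hx : σ' x = TV.root) :
    util (GT k) Prod.fst σ' x =
      ((univ.filter fun b => colOf σ' (TV.mid b) = x.1).card : ℚ) / (k*(k-1)-1 : ℕ) := by
  rw [util, hx, nbr_root, card_image_of_injective _ (mid_injective k)]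
  have himg : ((univ.image TV.mid).filter fun w => (σ'.symm w).1 = x.1).card
      = (univ.filter fun b => colOf σ' (TV.mid b) = x.1).card := by
    rw [Finset.filter_image, card_image_of_injective _ (mid_injective k)]
    rfl
  rw [himg]; simp

/-- number of middle nodes occupied by color `a` -/
def mcnt (σ : AgT k ≃ TV k) (a : Fin k) : ℕ :=
  (univ.filter fun b => colOf σ (TV.mid b) = a).card

/-- number of leaves of middle node `i` occupied by color `a` -/
def lcnt (σ : AgT k ≃ TV k) (i : Fin (k*(k-1)-1)) (a : Fin k) : ℕ :=
  (univ.filter fun j => colOf σ (TV.leaf i j) = a).card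

/-- numerator of the utility of the occupant of middle node `i` wrt color `a` -/
def wcnt (σ : AgT k ≃ TV k) (i : Fin (k*(k-1)-1)) (a : Fin k) : ℕ :=
  lcnt σ i a + if colOf σ TV.root = a then 1 else 0

lemma swapA_apply_left (σ : AgT k ≃ TV k) (i j : AgT k) : swapA σ i j i = σ j := by
  simp [swapA]

lemma swapA_apply_right (σ : AgT k ≃ TV k) (i j : AgT k) : swapA σ i j j = σ i := by
  simp [swapA]

lemma colOf_swapA (σ : AgT k ≃ TV k) (i j : AgT k) (v : TV k)
    (h1 : v ≠ σ i) (h2 : v ≠ σ j) : colOf (swapA σ i j) v = colOf σ v := by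
  have e1 : σ.symm v ≠ i := fun h => h1 (by rw [← h, Equiv.apply_symm_apply])
  have e2 : σ.symm v ≠ j := fun h => h2 (by rw [← h, Equiv.apply_symm_apply])
  unfold colOf swapA
  simp [Equiv.swap_apply_of_ne_of_ne e1 e2]

lemma improving_leaf_mid (σ : AgT k ≃ TV k)
    (b₁ b₂ : Fin (k*(k-1)-1)) (hb : b₁ ≠ b₂) (j₁ : Fin k)
    (hst : colOf σ (TV.leaf b₁ j₁) ≠ colOf σ (TV.mid b₁))
    (ht2 : colOf σ (TV.mid b₂) = colOf σ (TV.mid b₁))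
    (hpos : 1 ≤ wcnt σ b₂ (colOf σ (TV.leaf b₁ j₁)))
    (hlt : wcnt σ b₂ (colOf σ (TV.mid b₂)) ≤ k) :
    improving (GT k) Prod.fst σ (σ.symm (TV.leaf b₁ j₁)) (σ.symm (TV.mid b₂)) := by
  set i := σ.symm (TV.leaf b₁ j₁) with hi
  set j := σ.symm (TV.mid b₂) with hj
  have hσi : σ i = TV.leaf b₁ j₁ := Equiv.apply_symm_apply σ _
  have hσj : σ j = TV.mid b₂ := Equiv.apply_symm_apply σ _
  have hi1 : i.1 = colOf σ (TV.leaf b₁ j₁) := rfl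
  have hj1 : j.1 = colOf σ (TV.mid b₂) := rfl
  set σ' := swapA σ i j with hσ'
  have hσ'i : σ' i = TV.mid b₂ := by rw [hσ', swapA_apply_left, hσj]
  have hσ'j : σ' j = TV.leaf b₁ j₁ := by rw [hσ', swapA_apply_right, hσi]
  constructor
  · rw [util_at_leaf σ i b₁ j₁ hσi, util_at_mid σ' i b₂ hσ'i]
    rw [if_neg (by rw [hi1]; exact fun h => hst h.symm)]
    have hA : (univ.filter fun j' => colOf σ' (TV.leaf b₂ j') = i.1)
        = (univ.filter fun j' => colOf σ (TV.leaf b₂ j') = i.1) := by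
      apply filter_congr
      intro j' _
      rw [colOf_swapA σ i j _ (by rw [hσi]; simp [hb.symm]) (by rw [hσj]; simp)]
    have hB : colOf σ' TV.root = colOf σ TV.root := by
      rw [colOf_swapA σ i j _ (by rw [hσi]; simp) (by rw [hσj]; simp)]
    rw [hA, hB]
    have hnum : 1 ≤ ((univ.filter fun j' => colOf σ (TV.leaf b₂ j') = i.1).card
        + if colOf σ TV.root = i.1 then 1 else 0 : ℕ) := by
      rw [hi1]; exact hpos
    apply div_pos
    · exact_mod_cast Nat.lt_of_lt_of_le Nat.zero_lt_one hnum
    · positivity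
  · rw [util_at_mid σ j b₂ hσj, util_at_leaf σ' j b₁ j₁ hσ'j]
    have hC : colOf σ' (TV.mid b₁) = colOf σ (TV.mid b₁) := by
      rw [colOf_swapA σ i j _ (by rw [hσi]; simp) (by rw [hσj]; simp [hb])]
    have hone : (if colOf σ' (TV.mid b₁) = j.1 then (1:ℚ) else 0) = 1 := by
      rw [if_pos (by simp [hC, hj1, ht2])]
    rw [hone]
    have hnum : ((univ.filter fun j' => colOf σ (TV.leaf b₂ j') = j.1).card
        + if colOf σ TV.root = j.1 then 1 else 0 : ℕ) ≤ k := by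
      rw [hj1]; exact hlt
    rw [div_lt_one (by positivity)]
    calc ((_ : ℕ) : ℚ) ≤ (k : ℚ) := by exact_mod_cast hnum
    _ < (k : ℚ) + 1 := by linarith

lemma improving_leaf_root (σ : AgT k ≃ TV k)
    (b₁ : Fin (k*(k-1)-1)) (j₁ : Fin k)
    (h1 : colOf σ (TV.mid b₁) = colOf σ TV.root)
    (hst : colOf σ (TV.leaf b₁ j₁) ≠ colOf σ TV.root)
    (hpos : 1 ≤ mcnt σ (colOf σ (TV.leaf b₁ j₁)))
    (hlt : mcnt σ (colOf σ TV.root) < k*(k-1)-1) :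
    improving (GT k) Prod.fst σ (σ.symm (TV.leaf b₁ j₁)) (σ.symm TV.root) := by
  set i := σ.symm (TV.leaf b₁ j₁) with hi
  set j := σ.symm TV.root with hj
  have hσi : σ i = TV.leaf b₁ j₁ := Equiv.apply_symm_apply σ _
  have hσj : σ j = TV.root := Equiv.apply_symm_apply σ _
  have hi1 : i.1 = colOf σ (TV.leaf b₁ j₁) := rfl
  have hj1 : j.1 = colOf σ TV.root := rfl
  set σ' := swapA σ i j with hσ'
  have hσ'i : σ' i = TV.root := by rw [hσ', swapA_apply_left, hσj]
  have hσ'j : σ' j = TV.leaf b₁ j₁ := by rw [hσ', swapA_apply_right, hσi]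
  have hMpos : 0 < k*(k-1)-1 := by omega
  constructor
  · rw [util_at_leaf σ i b₁ j₁ hσi, util_at_root σ' i hσ'i]
    rw [if_neg (by rw [hi1, h1]; exact fun h => hst h.symm)]
    have hA : (univ.filter fun b => colOf σ' (TV.mid b) = i.1)
        = (univ.filter fun b => colOf σ (TV.mid b) = i.1) := by
      apply filter_congr
      intro b _
      rw [colOf_swapA σ i j _ (by rw [hσi]; simp) (by rw [hσj]; simp)]
    rw [hA]
    apply div_pos
    · have : 1 ≤ (univ.filter fun b => colOf σ (TV.mid b) = i.1).card := by
        rw [hi1]; exact hpos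
      exact_mod_cast Nat.lt_of_lt_of_le Nat.zero_lt_one this
    · have : (0:ℕ) < k*(k-1)-1 := Nat.pos_of_ne_zero (by omega)
      exact_mod_cast this
  · rw [util_at_root σ j hσj, util_at_leaf σ' j b₁ j₁ hσ'j]
    have hC : colOf σ' (TV.mid b₁) = colOf σ (TV.mid b₁) := by
      rw [colOf_swapA σ i j _ (by rw [hσi]; simp) (by rw [hσj]; simp)]
    have hone : (if colOf σ' (TV.mid b₁) = j.1 then (1:ℚ) else 0) = 1 := by
      rw [if_pos (by simp [hC, hj1, h1])]
    rw [hone]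
    have hMpos' : (0:ℕ) < k*(k-1)-1 := Nat.pos_of_ne_zero (by omega)
    rw [div_lt_one (by exact_mod_cast hMpos')]
    have : (univ.filter fun b => colOf σ (TV.mid b) = j.1).card < k*(k-1)-1 := by
      rw [hj1]; exact hlt
    exact_mod_cast this

lemma leafP_injective (k : ℕ) :
    Function.Injective (fun p : Fin (k*(k-1)-1) × Fin k => TV.leaf (k := k) p.1 p.2) := by
  intro p q h
  cases p; cases q; simp_all

/-- concentration: two same-colored foreign leaves under same-colored middles
are under the same middle node -/
lemma conc (σ : AgT k ≃ TV k) (heq : isEquilibrium (GT k) Prod.fst σ)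
    {b₁ b₂ : Fin (k*(k-1)-1)} {j₁ j₂ : Fin k}
    (h1 : colOf σ (TV.leaf b₁ j₁) = colOf σ (TV.leaf b₂ j₂))
    (hm : colOf σ (TV.mid b₁) = colOf σ (TV.mid b₂))
    (hs : colOf σ (TV.leaf b₁ j₁) ≠ colOf σ (TV.mid b₁)) :
    b₁ = b₂ := by
  by_contra hb
  refine heq ⟨_, _, improving_leaf_mid σ b₁ b₂ hb j₁ hs hm.symm ?_ ?_⟩
  · have hmem : j₂ ∈ univ.filter fun j' => colOf σ (TV.leaf b₂ j') = colOf σ (TV.leaf b₁ j₁) := by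
      simp [h1]
    have : 1 ≤ lcnt σ b₂ (colOf σ (TV.leaf b₁ j₁)) :=
      card_pos.mpr ⟨j₂, hmem⟩
    exact le_trans this (Nat.le_add_right _ _)
  · have hsub : (univ.filter fun j' => colOf σ (TV.leaf b₂ j') = colOf σ (TV.mid b₂))
        ⊆ univ.erase j₂ := by
      intro j' hj'
      simp only [mem_filter, mem_univ, true_and] at hj'
      simp only [mem_erase, mem_univ, and_true]
      intro hjj
      rw [hjj, h1.symm, ← hm] at hj'
      exact hs hj'
    have h2 : lcnt σ b₂ (colOf σ (TV.mid b₂)) ≤ k - 1 := by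
      have := card_le_card hsub
      rwa [card_erase_of_mem (mem_univ j₂), card_univ, Fintype.card_fin] at this
    have hk1 : 1 ≤ k := j₁.pos
    unfold wcnt
    have : (if colOf σ TV.root = colOf σ (TV.mid b₂) then 1 else 0) ≤ 1 := by
      split <;> omega
    omega

/-- root-colored variant: a root-colored leaf under a middle of color `u ≠ t₀`
forces `u` to occupy a unique middle node -/
lemma concRoot (σ : AgT k ≃ TV k) (heq : isEquilibrium (GT k) Prod.fst σ)
    {b₁ b₂ : Fin (k*(k-1)-1)} {j₁ : Fin k}
    (h0 : colOf σ (TV.leaf b₁ j₁) = colOf σ TV.root)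
    (hs : colOf σ (TV.leaf b₁ j₁) ≠ colOf σ (TV.mid b₁))
    (hm : colOf σ (TV.mid b₁) = colOf σ (TV.mid b₂)) :
    b₁ = b₂ := by
  by_contra hb
  refine heq ⟨_, _, improving_leaf_mid σ b₁ b₂ hb j₁ hs hm.symm ?_ ?_⟩
  · unfold wcnt
    rw [if_pos h0.symm]
    omega
  · unfold wcnt
    have hne : ¬ colOf σ TV.root = colOf σ (TV.mid b₂) := by
      rw [← hm, ← h0]; exact fun h => hs h
    rw [if_neg hne]
    have : lcnt σ b₂ (colOf σ (TV.mid b₂)) ≤ k := by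
      unfold lcnt
      calc _ ≤ (univ : Finset (Fin k)).card := card_le_card (filter_subset _ _)
      _ = k := by simp
    omega

/-- purity: all leaves under root-colored middles are root-colored -/
lemma pure_mid (σ : AgT k ≃ TV k) (heq : isEquilibrium (GT k) Prod.fst σ)
    (hall : ∀ q, q ≠ colOf σ TV.root → 1 ≤ mcnt σ q)
    (hlt : mcnt σ (colOf σ TV.root) < k*(k-1)-1)
    (b : Fin (k*(k-1)-1)) (j : Fin k) (hb : colOf σ (TV.mid b) = colOf σ TV.root) :
    colOf σ (TV.leaf b j) = colOf σ TV.root := by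
  by_contra hne
  exact heq ⟨_, _, improving_leaf_root σ b j hb hne (hall _ hne) hlt⟩

/-- each color occupies exactly `k²-2` nodes -/
lemma card_colOf (σ : AgT k ≃ TV k) (a : Fin k) :
    (univ.filter fun v : TV k => colOf σ v = a).card = k^2 - 2 := by
  have h1 : (univ.filter fun v : TV k => colOf σ v = a)
      = (univ.filter fun x : AgT k => x.1 = a).image σ := by
    ext v
    simp only [mem_filter, mem_univ, true_and, mem_image]
    constructor
    · intro h; exact ⟨σ.symm v, h, by simp⟩
    · rintro ⟨x, hx, rfl⟩; simpa [colOf] using hx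
  rw [h1, card_image_of_injective _ σ.injective]
  have h2 : (univ.filter fun x : AgT k => x.1 = a) = {a} ×ˢ (univ : Finset (Fin (k^2-2))) := by
    ext x
    cases x
    simp [eq_comm, and_comm]
  rw [h2]
  simp

/-- a fiber of foreign `q`-leaves over a host color `u` has at most `k` elements -/
lemma fiber_le (σ : AgT k ≃ TV k) (heq : isEquilibrium (GT k) Prod.fst σ)
    (q u : Fin k) (hqu : q ≠ u) :
    ((univ : Finset (Fin (k*(k-1)-1) × Fin k)).filter
      fun p => colOf σ (TV.leaf p.1 p.2) = q ∧ colOf σ (TV.mid p.1) = u).card ≤ k := by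
  set S := (univ : Finset (Fin (k*(k-1)-1) × Fin k)).filter
      (fun p => colOf σ (TV.leaf p.1 p.2) = q ∧ colOf σ (TV.mid p.1) = u) with hS
  rcases S.eq_empty_or_nonempty with h | ⟨⟨b₀, j₀⟩, h₀⟩
  · simp [h]
  · have hb₀ := (mem_filter.mp h₀).2
    have hsub : S ⊆ {b₀} ×ˢ (univ : Finset (Fin k)) := by
      rintro ⟨b, j⟩ hmem
      have hb := (mem_filter.mp hmem).2
      have : b = b₀ := by
        apply conc σ heq (j₁ := j) (j₂ := j₀)
        · rw [hb.1, hb₀.1]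
        · rw [hb.2, hb₀.2]
        · rw [hb.1, hb.2]; exact hqu
      simp [this]
    calc S.card ≤ _ := card_le_card hsub
    _ = k := by simp

lemma sum_fiber_bound (σ : AgT k ≃ TV k) (hk : 3 ≤ k)
    (L : Finset (Fin (k*(k-1)-1) × Fin k)) (g : Fin k → ℕ)
    (hfib : ∀ u : Fin k, (L.filter fun p => colOf σ (TV.mid p.1) = u).card ≤ g u) :
    L.card ≤ ∑ u : Fin k, g u := by
  rw [card_eq_sum_card_fiberwise (f := fun p => colOf σ (TV.mid p.1)) (t := univ)
    (fun x _ => mem_univ _)]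
  exact Finset.sum_le_sum (fun u _ => hfib u)

lemma exists_mid_of_ne_root (σ : AgT k ≃ TV k) (heq : isEquilibrium (GT k) Prod.fst σ)
    (hk : 3 ≤ k) (q : Fin k) (hq : q ≠ colOf σ TV.root) : 1 ≤ mcnt σ q := by
  by_contra hno
  have hm0 : mcnt σ q = 0 := by omega
  set L := (univ : Finset (Fin (k*(k-1)-1) × Fin k)).filter
      (fun p => colOf σ (TV.leaf p.1 p.2) = q) with hL
  have hTset : (univ.filter fun v : TV k => colOf σ v = q)
      = L.image (fun p => TV.leaf p.1 p.2) := by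
    ext v
    cases v with
    | root =>
        simp only [mem_filter, mem_univ, true_and, mem_image]
        constructor
        · intro h; exact absurd h.symm (Ne.symm (fun h' => hq h'.symm))
        · rintro ⟨p, _, h⟩; cases h
    | mid b =>
        simp only [mem_filter, mem_univ, true_and, mem_image]
        constructor
        · intro h
          exfalso
          have : b ∈ univ.filter fun b' => colOf σ (TV.mid b') = q := by simp [h]
          have : 1 ≤ mcnt σ q := card_pos.mpr ⟨b, this⟩
          omega
        · rintro ⟨p, _, h⟩; cases h
    | leaf b j =>
        simp only [mem_filter, mem_univ, true_and, mem_image, hL]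
        constructor
        · intro h; exact ⟨(b, j), by simp [h], rfl⟩
        · rintro ⟨⟨b', j'⟩, hp, h⟩
          cases h
          exact hp
  have hcard : k^2 - 2 = L.card := by
    rw [← card_colOf σ q, hTset, card_image_of_injective _ (leafP_injective k)]
  have hbound : L.card ≤ ∑ u : Fin k, (if u = q then 0 else k) := by
    apply sum_fiber_bound σ hk
    intro u
    by_cases huq : u = q
    · subst huq
      have : L.filter (fun p => colOf σ (TV.mid p.1) = u) = ∅ := by
        rw [eq_empty_iff_forall_notMem]
        rintro ⟨b, j⟩ hmem
        simp only [hL, filter_filter, mem_filter, mem_univ, true_and] at hmem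
        have : b ∈ univ.filter fun b' => colOf σ (TV.mid b') = u := by simp [hmem.2]
        have : 1 ≤ mcnt σ u := card_pos.mpr ⟨b, this⟩
        omega
      simp [this]
    · rw [if_neg huq, hL, filter_filter]
      exact fiber_le σ heq q u (fun h => huq h.symm)
  have hsum : ∑ u : Fin k, (if u = q then 0 else k) = (k-1) * k := by
    rw [← Finset.sum_erase_add _ _ (mem_univ q), if_pos rfl, Nat.add_zero]
    rw [Finset.sum_congr rfl (fun u hu => if_neg (mem_erase.mp hu).1)]
    rw [Finset.sum_const, card_erase_of_mem (mem_univ q), card_univ, Fintype.card_fin,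
      smul_eq_mul]
  have hkk : k^2 = k*k := sq k
  have h1 : (k-1)*k = k*k - k := by rw [Nat.sub_mul, one_mul]
  have h3 : 9 ≤ k*k := Nat.mul_le_mul hk hk
  omega

theorem no_equilibrium_k_types' (k : ℕ) (hk : 3 ≤ k) (σ : AgT k ≃ TV k) :
    ¬ isEquilibrium (GT k) Prod.fst σ := by
  intro heq
  have hkk : k^2 = k*k := sq k
  have hk6 : 6 ≤ k*(k-1) := by
    have h2 : 2 ≤ k-1 := by omega
    calc (6:ℕ) = 3*2 := rfl
    _ ≤ k*(k-1) := Nat.mul_le_mul hk h2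
  have h9 : 9 ≤ k*k := Nat.mul_le_mul hk hk
  have hall : ∀ q, q ≠ colOf σ TV.root → 1 ≤ mcnt σ q :=
    fun q hq => exists_mid_of_ne_root σ heq hk q hq
  -- some color different from the root color
  obtain ⟨q, hq⟩ : ∃ q : Fin k, q ≠ colOf σ TV.root := by
    by_cases h : colOf σ TV.root = ⟨0, by omega⟩
    · exact ⟨⟨1, by omega⟩, by rw [h]; intro hh; simp [Fin.mk.injEq] at hh⟩
    · exact ⟨⟨0, by omega⟩, fun hh => h hh.symm⟩
  have hm0lt : mcnt σ (colOf σ TV.root) < k*(k-1)-1 := by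
    have hdisj : Disjoint (univ.filter fun b => colOf σ (TV.mid b) = colOf σ TV.root)
        (univ.filter fun b => colOf σ (TV.mid b) = q) := by
      rw [Finset.disjoint_left]
      intro b h1 h2
      simp only [mem_filter, mem_univ, true_and] at h1 h2
      rw [h1] at h2
      exact hq h2.symm
    have hcard := card_union_of_disjoint hdisj
    have hle : ((univ.filter fun b => colOf σ (TV.mid b) = colOf σ TV.root) ∪
        (univ.filter fun b => colOf σ (TV.mid b) = q)).card ≤ k*(k-1)-1 := by
      calc _ ≤ (univ : Finset (Fin (k*(k-1)-1))).card := card_le_univ _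
      _ = k*(k-1)-1 := by simp
    have hq1 := hall q hq
    unfold mcnt at *
    omega
  have hpure := pure_mid σ heq hall hm0lt
  -- there is a root-colored leaf under a middle node of another color
  obtain ⟨b, j, hbj, hbu⟩ : ∃ b j, colOf σ (TV.leaf b j) = colOf σ TV.root ∧
      colOf σ (TV.mid b) ≠ colOf σ TV.root := by
    by_contra hforn
    push_neg at hforn
    set Bt := univ.filter (fun b => colOf σ (TV.mid b) = colOf σ TV.root) with hBt
    have hTset : (univ.filter fun v : TV k => colOf σ v = colOf σ TV.root)
        = ({TV.root} ∪ Bt.image TV.mid) ∪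
          (Bt ×ˢ univ).image (fun p => TV.leaf p.1 p.2) := by
      ext v
      cases v with
      | root => simp
      | mid b =>
          simp only [mem_filter, mem_univ, true_and, mem_union, mem_singleton, mem_image,
            hBt]
          constructor
          · intro h
            exact Or.inl (Or.inr ⟨b, by simp [h], rfl⟩)
          · rintro ((h | ⟨b', hb', h⟩) | ⟨p, hp, h⟩) <;> first
              | (cases h; simp_all) | cases h
      | leaf b' j' =>
          simp only [mem_filter, mem_univ, true_and, mem_union, mem_singleton, mem_image,
            hBt]
          constructor
          · intro h
            refine Or.inr ⟨(b', j'), ?_, rfl⟩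
            simp only [mem_product, mem_filter, mem_univ, true_and, and_true]
            exact hforn b' j' h
          · rintro ((h | ⟨b'', hb'', h⟩) | ⟨⟨b'', j''⟩, hp, h⟩)
            · cases h
            · cases h
            · cases h
              simp only [mem_product, mem_filter, mem_univ, true_and, and_true] at hp
              exact hpure b'' j'' hp
    have hd1 : Disjoint ({TV.root} : Finset (TV k)) (Bt.image TV.mid) := by
      rw [Finset.disjoint_left]; intro v h1 h2
      rw [mem_singleton] at h1; subst h1
      obtain ⟨b', _, h⟩ := mem_image.mp h2; cases h
    have hd2 : Disjoint ({TV.root} ∪ Bt.image TV.mid)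
        ((Bt ×ˢ univ).image (fun p => TV.leaf p.1 p.2)) := by
      rw [Finset.disjoint_left]; intro v h1 h2
      obtain ⟨p, _, h⟩ := mem_image.mp h2
      subst h
      rcases mem_union.mp h1 with h | h
      · cases mem_singleton.mp h
      · obtain ⟨b', _, h⟩ := mem_image.mp h; cases h
    have hcards : k^2 - 2 = 1 + mcnt σ (colOf σ TV.root) +
        mcnt σ (colOf σ TV.root) * k := by
      rw [← card_colOf σ (colOf σ TV.root), hTset, card_union_of_disjoint hd2,
        card_union_of_disjoint hd1, card_singleton,
        card_image_of_injective _ (mid_injective k),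
        card_image_of_injective _ (leafP_injective k), card_product, card_univ,
        Fintype.card_fin]
      rfl
    rw [show k^2 - 2 = k*k - 2 by rw [hkk]] at hcards
    set m₀ := mcnt σ (colOf σ TV.root) with hm₀
    rcases le_or_gt (m₀+2) k with hm | hm
    · have h4 : (m₀+2)*k ≤ k*k := Nat.mul_le_mul_right _ hm
      have h5 : (m₀+2)*k = m₀*k + 2*k := by ring
      omega
    · have h4 : k*k ≤ (m₀+1)*k := Nat.mul_le_mul_right _ (by omega)
      have h5 : (m₀+1)*k = m₀*k + k := by ring
      omega
  -- the (unique) middle node of the host color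
  have huniq : ∀ b', colOf σ (TV.mid b') = colOf σ (TV.mid b) → b' = b := by
    intro b' h
    exact (concRoot σ heq hbj (by rw [hbj]; exact fun h' => hbu h'.symm) h.symm).symm
  set u := colOf σ (TV.mid b) with hu
  set Lu := (univ : Finset (Fin (k*(k-1)-1) × Fin k)).filter
      (fun p => colOf σ (TV.leaf p.1 p.2) = u) with hLu
  have hTset : (univ.filter fun v : TV k => colOf σ v = u)
      = ({b} : Finset _).image TV.mid ∪ Lu.image (fun p => TV.leaf p.1 p.2) := by
    ext v
    cases v with
    | root =>
        simp only [mem_filter, mem_univ, true_and, mem_union, mem_image, hLu]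
        constructor
        · intro h; exact absurd h.symm hbu
        · rintro (⟨b', _, h⟩ | ⟨p, _, h⟩) <;> cases h
    | mid b' =>
        simp only [mem_filter, mem_univ, true_and, mem_union, mem_image, mem_singleton]
        constructor
        · intro h; exact Or.inl ⟨b, rfl, by rw [huniq b' h]⟩
        · rintro (⟨b'', hb'', h⟩ | ⟨p, _, h⟩)
          · cases h; subst hb''; rfl
          · cases h
    | leaf b' j' =>
        simp only [mem_filter, mem_univ, true_and, mem_union, mem_image, hLu]
        constructor
        · intro h; exact Or.inr ⟨(b', j'), by simp [h], rfl⟩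
        · rintro (⟨b'', _, h⟩ | ⟨⟨b'', j''⟩, hp, h⟩)
          · cases h
          · cases h
            simpa using hp
  have hd : Disjoint (({b} : Finset _).image TV.mid)
      (Lu.image (fun p => TV.leaf p.1 p.2)) := by
    rw [Finset.disjoint_left]; intro v h1 h2
    obtain ⟨b', _, h⟩ := mem_image.mp h1; subst h
    obtain ⟨p, _, h⟩ := mem_image.mp h2; cases h
  have hcards : k^2 - 2 = 1 + Lu.card := by
    rw [← card_colOf σ u, hTset, card_union_of_disjoint hd,
      card_image_of_injective _ (mid_injective k),
      card_image_of_injective _ (leafP_injective k), card_singleton]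
  have hbound : Lu.card ≤ ∑ w : Fin k,
      (if w = colOf σ TV.root then 0 else if w = u then k-1 else k) := by
    apply sum_fiber_bound σ hk
    intro w
    by_cases hw0 : w = colOf σ TV.root
    · have hemp : Lu.filter (fun p => colOf σ (TV.mid p.1) = w) = ∅ := by
        rw [eq_empty_iff_forall_notMem]
        rintro ⟨b', j'⟩ hmem
        simp only [hLu, filter_filter, mem_filter, mem_univ, true_and] at hmem
        have h2 := hpure b' j' (by rw [hmem.2, hw0])
        rw [hmem.1] at h2
        exact hbu h2
      rw [if_pos hw0, hemp, card_empty]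
    · by_cases hwu : w = u
      · rw [if_neg hw0, if_pos hwu]
        have hsub : Lu.filter (fun p => colOf σ (TV.mid p.1) = w)
            ⊆ {b} ×ˢ (univ.erase j) := by
          rintro ⟨b', j'⟩ hmem
          simp only [hLu, filter_filter, mem_filter, mem_univ, true_and] at hmem
          have hb' : b' = b := huniq b' (by rw [hmem.2, hwu])
          apply mem_product.mpr
          refine ⟨by rw [hb']; exact mem_singleton_self b, mem_erase.mpr ⟨?_, mem_univ _⟩⟩
          intro hj'
          have hj2 : j' = j := hj'
          rw [hb', hj2] at hmem
          exact hbu (by rw [← hmem.1]; exact hbj)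
        calc _ ≤ ({b} ×ˢ (univ.erase j)).card := card_le_card hsub
        _ = k - 1 := by
            rw [card_product, card_singleton, card_erase_of_mem (mem_univ j), card_univ,
              Fintype.card_fin, one_mul]
      · rw [if_neg hw0, if_neg hwu, hLu, filter_filter]
        exact fiber_le σ heq u w (fun h => hwu h.symm)
  have hsum : ∑ w : Fin k,
      (if w = colOf σ TV.root then 0 else if w = u then k-1 else k)
      = (k-2)*k + (k-1) := by
    have hu0 : u ≠ colOf σ TV.root := hbu
    rw [← Finset.sum_erase_add _ _ (mem_univ (colOf σ TV.root)), if_pos rfl, Nat.add_zero]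
    have humem : u ∈ univ.erase (colOf σ TV.root) := mem_erase.mpr ⟨hu0, mem_univ u⟩
    rw [← Finset.sum_erase_add _ _ humem, if_neg hu0, if_pos rfl]
    congr 1
    have hcongr : ∀ w ∈ ((univ : Finset (Fin k)).erase (colOf σ TV.root)).erase u,
        (if w = colOf σ TV.root then 0 else if w = u then k-1 else k) = k := by
      intro w hw
      have hw1 := (mem_erase.mp hw).1
      have hw2 := (mem_erase.mp (mem_erase.mp hw).2).1
      rw [if_neg hw2, if_neg hw1]
    rw [Finset.sum_congr rfl hcongr, Finset.sum_const, card_erase_of_mem humem,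
      card_erase_of_mem (mem_univ _), card_univ, Fintype.card_fin, smul_eq_mul]
    congr 1
  rw [hsum] at hbound
  rw [show k^2 - 2 = k*k - 2 by rw [hkk]] at hcards
  have e : (k-2+2) * k = k*k := by rw [show k-2+2 = k from by omega]
  rw [Nat.add_mul] at e
  omega

/-- for every `k ≥ 3`, the `k`-swap game with `k² − 2` strategic agents of
each of the `k` types on the three-layer tree (root, `k(k−1)−1` middle nodes, `k` leaves
per middle node) admits no equilibrium assignment. -/
theorem no_equilibrium_k_types (k : ℕ) (hk : 3 ≤ k) (σ : AgT k ≃ TV k) :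
    ¬ isEquilibrium (GT k) Prod.fst σ := by
  exact no_equilibrium_k_types' k hk σ

end SwapGame
end

section
/- For every n ≥ 5, the 2-swap game with n−2 strategic red agents and 2 strategic blue agents on the star topology with n nodes admits an equilibrium assignment v (one blue agent at the center) with SW(v) = 1 + 1/(n−1) ≤ 2, while the assignment v* with a red agent at the center satisfies SW(v*) = n−3 + (n−3)/(n−1) ≥ n−3. Hence the social price of anarchy of 2-swap games with only strategic agents and at least two agents per type is at least (n−3)/2 = Ω(n). -/
open Finset

namespace SwapGame

/-- The star topology on `n` nodes: node `0` is the center, adjacent to all other nodes. -/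
abbrev Star (n : ℕ) : SimpleGraph (Fin n) := mkGraph (fun a _ => decide ((a : ℕ) = 0))

/-- Agents: `n − 2` red agents and `2` blue agents. -/
abbrev A7 (n : ℕ) := Fin (n - 2) ⊕ Fin 2

/-- The type (color) of each agent: `0` = red, `1` = blue. -/
def c7 (n : ℕ) : A7 n → Fin 2 := Sum.elim (fun _ => 0) (fun _ => 1)

section Aux

variable {n : ℕ}

lemma mkGraph_adj {V : Type*} (r : V → V → Bool) (a b : V) :
    (mkGraph r).Adj a b ↔ a ≠ b ∧ (r a b ∨ r b a) := Iff.rfl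

lemma star_adj (a b : Fin n) :
    (Star n).Adj a b ↔ a ≠ b ∧ ((a : ℕ) = 0 ∨ (b : ℕ) = 0) := by
  simp [mkGraph_adj]

lemma star_nbhd_zero (h : 0 < n) :
    (Star n).neighborFinset ⟨0, h⟩ = Finset.univ.erase ⟨0, h⟩ := by
  ext w
  simp only [SimpleGraph.mem_neighborFinset, star_adj, Finset.mem_erase, Finset.mem_univ,
    and_true, ne_eq, Fin.ext_iff, true_or]
  omega

lemma star_nbhd_leaf (h : 0 < n) (x : Fin n) (hx : (x : ℕ) ≠ 0) :
    (Star n).neighborFinset x = {⟨0, h⟩} := by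
  ext w
  simp only [SimpleGraph.mem_neighborFinset, star_adj, Finset.mem_singleton, ne_eq, Fin.ext_iff]
  omega

lemma util_nonneg {A V K : Type*} [Fintype V] [DecidableEq A] [DecidableEq V] [DecidableEq K]
    (G : SimpleGraph V) [DecidableRel G.Adj] (c : A → K) (σ : A ≃ V) (i : A) :
    0 ≤ util G c σ i := by
  unfold util; positivity

lemma util_le_one {A V K : Type*} [Fintype V] [DecidableEq A] [DecidableEq V] [DecidableEq K]
    (G : SimpleGraph V) [DecidableRel G.Adj] (c : A → K) (σ : A ≃ V) (i : A) :
    util G c σ i ≤ 1 := by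
  unfold util
  rcases Nat.eq_zero_or_pos ((G.neighborFinset (σ i)).card) with h | h
  · simp [h]
  · rw [div_le_one (by exact_mod_cast h)]
    exact_mod_cast Finset.card_filter_le _ _

lemma swapA_symm_apply {A V : Type*} [DecidableEq A] (σ : A ≃ V) (i j : A) (w : V) :
    (swapA σ i j).symm w = Equiv.swap i j (σ.symm w) := by
  simp [swapA]

lemma swapA_apply {A V : Type*} [DecidableEq A] (σ : A ≃ V) (i j a : A) :
    swapA σ i j a = σ (Equiv.swap i j a) := rfl

lemma swapA_self {A V : Type*} [DecidableEq A] (σ : A ≃ V) (i : A) :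
    swapA σ i i = σ := by
  simp [swapA]

lemma swapA_comm {A V : Type*} [DecidableEq A] (σ : A ≃ V) (i j : A) :
    swapA σ i j = swapA σ j i := by
  simp [swapA, Equiv.swap_comm]

lemma util_leaf {A K : Type*} [DecidableEq A] [DecidableEq K]
    (h : 0 < n) (c : A → K) (σ : A ≃ Fin n) (i : A) (hi : ((σ i : Fin n) : ℕ) ≠ 0) :
    util (Star n) c σ i = if c (σ.symm ⟨0, h⟩) = c i then 1 else 0 := by
  unfold util
  rw [star_nbhd_leaf h _ hi, Finset.filter_singleton]
  split_ifs <;> simp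

lemma util_center {A K : Type*} [DecidableEq A] [DecidableEq K]
    (h : 0 < n) (c : A → K) (σ : A ≃ Fin n) (i : A) (hi : σ i = ⟨0, h⟩) :
    util (Star n) c σ i =
      (((Finset.univ.erase (⟨0, h⟩ : Fin n)).filter (fun w => c (σ.symm w) = c i)).card : ℚ) /
        ((n - 1 : ℕ) : ℚ) := by
  unfold util
  rw [hi, star_nbhd_zero h, Finset.card_erase_of_mem (Finset.mem_univ _),
    Finset.card_univ, Fintype.card_fin]


/-- Blue-center assignment: blue agents at nodes `0` (center) and `1`,
red agent `k` at node `k+2`. -/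
def sigB (hn : 5 ≤ n) : A7 n ≃ Fin n where
  toFun := Sum.elim (fun k => ⟨(k : ℕ) + 2, by have := k.isLt; omega⟩)
    (fun b => ⟨(b : ℕ), by have := b.isLt; omega⟩)
  invFun w := if h : (w : ℕ) < 2 then Sum.inr ⟨w, h⟩
    else Sum.inl ⟨(w : ℕ) - 2, by have := w.isLt; omega⟩
  left_inv := by
    rintro (k | b)
    · simp only [Sum.elim_inl]
      split_ifs with h
      · exact absurd h (by omega)
      rfl
    · simp only [Sum.elim_inr]
      split_ifs with h
      · exact dif_pos h
      · exact absurd b.isLt h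
  right_inv := by
    intro w
    dsimp only
    split_ifs with h
    · rfl
    · ext
      simp
      omega

/-- Red-center assignment: red agent `k` at node `k`, blue agents at the last two nodes. -/
def sigR (hn : 5 ≤ n) : A7 n ≃ Fin n where
  toFun := Sum.elim (fun k => ⟨(k : ℕ), by have := k.isLt; omega⟩)
    (fun b => ⟨n - 2 + (b : ℕ), by have := b.isLt; omega⟩)
  invFun w := if h : (w : ℕ) < n - 2 then Sum.inl ⟨w, h⟩
    else Sum.inr ⟨(w : ℕ) - (n - 2), by have := w.isLt; omega⟩
  left_inv := by
    rintro (k | b)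
    · simp only [Sum.elim_inl]
      split_ifs with h
      · exact dif_pos h
      · exact absurd k.isLt h
    · simp only [Sum.elim_inr]
      refine (dif_neg (by omega)).trans ?_
      congr 1
      ext
      simp
  right_inv := by
    intro w
    dsimp only
    split_ifs with h
    · rfl
    · ext
      simp
      omega

lemma sigB_symm_apply (hn : 5 ≤ n) (w : Fin n) :
    (sigB hn).symm w = if h : (w : ℕ) < 2 then Sum.inr ⟨w, h⟩
      else Sum.inl ⟨(w : ℕ) - 2, by have := w.isLt; omega⟩ := rfl

lemma sigB_symm_zero (hn : 5 ≤ n) (h0 : 0 < n) :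
    (sigB hn).symm ⟨0, h0⟩ = Sum.inr 0 := by
  rw [sigB_symm_apply, dif_pos (by norm_num)]
  rfl

lemma sigB_color (hn : 5 ≤ n) (w : Fin n) :
    c7 n ((sigB hn).symm w) = if (w : ℕ) < 2 then 1 else 0 := by
  rw [sigB_symm_apply]
  split_ifs <;> rfl

lemma sigR_symm_apply (hn : 5 ≤ n) (w : Fin n) :
    (sigR hn).symm w = if h : (w : ℕ) < n - 2 then Sum.inl ⟨w, h⟩
      else Sum.inr ⟨(w : ℕ) - (n - 2), by have := w.isLt; omega⟩ := rfl

lemma sigR_symm_zero (hn : 5 ≤ n) (h0 : 0 < n) :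
    (sigR hn).symm ⟨0, h0⟩ = Sum.inl ⟨0, by omega⟩ := by
  rw [sigR_symm_apply, dif_pos (by simp; omega)]


lemma sigB_equilibrium (hn : 5 ≤ n) : isEquilibrium (Star n) (c7 n) (sigB hn) := by
  have h0 : 0 < n := by omega
  set σ := sigB hn with hσ
  have hz : σ.symm ⟨0, h0⟩ = Sum.inr 0 := sigB_symm_zero hn h0
  have key : ∀ i j : A7 n, σ i = ⟨0, h0⟩ → ¬ improving (Star n) (c7 n) σ i j := by
    intro i j hi himp
    have hi' : i = Sum.inr 0 := by
      rw [← hz, ← hi, Equiv.symm_apply_apply]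
    obtain ⟨h1, h2⟩ := himp
    rcases j with k | b
    · -- swapping with a red leaf agent: the center blue agent gets utility 0
      have hτi : swapA σ i (Sum.inl k) i = σ (Sum.inl k) := by
        rw [swapA_apply, Equiv.swap_apply_left]
      have hτz : (swapA σ i (Sum.inl k)).symm ⟨0, h0⟩ = Sum.inl k := by
        rw [swapA_symm_apply, hz, ← hi', Equiv.swap_apply_left]
      have hval : ((swapA σ i (Sum.inl k) i : Fin n) : ℕ) ≠ 0 := by
        rw [hτi]
        show (k : ℕ) + 2 ≠ 0
        omega
      rw [util_leaf h0 _ _ _ hval, hτz, hi'] at h1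
      simp only [c7, Sum.elim_inl, Sum.elim_inr] at h1
      split_ifs at h1 with hc
      · exact absurd hc (by decide)
      exact absurd h1 (not_lt.mpr (util_nonneg _ _ _ _))
    · -- swapping with a blue agent
      have hb : b = 0 ∨ b = 1 := by
        have := b.isLt
        rcases (show (b : ℕ) = 0 ∨ (b : ℕ) = 1 by omega) with h | h
        · exact Or.inl (Fin.ext h)
        · exact Or.inr (Fin.ext h)
      rcases hb with rfl | rfl
      · rw [← hi', swapA_self] at h1
        exact lt_irrefl _ h1
      · have hval : ((σ (Sum.inr 1) : Fin n) : ℕ) ≠ 0 := by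
          show ((1 : Fin 2) : ℕ) ≠ 0
          decide
        rw [util_leaf h0 _ _ _ hval, hz] at h2
        rw [if_pos (by rfl)] at h2
        exact absurd h2 (not_lt.mpr (util_le_one _ _ _ _))
  rintro ⟨i, j, himp⟩
  by_cases hi : σ i = ⟨0, h0⟩
  · exact key i j hi himp
  by_cases hj : σ j = ⟨0, h0⟩
  · refine key j i hj ⟨?_, ?_⟩
    · rw [swapA_comm]; exact himp.2
    · rw [swapA_comm]; exact himp.1
  · obtain ⟨h1, -⟩ := himp
    have hvi : ((σ i : Fin n) : ℕ) ≠ 0 := fun e => hi (by ext; exact e)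
    have hvj : ((σ j : Fin n) : ℕ) ≠ 0 := fun e => hj (by ext; exact e)
    have hτi : swapA σ i j i = σ j := by rw [swapA_apply, Equiv.swap_apply_left]
    have hsz : (swapA σ i j).symm ⟨0, h0⟩ = σ.symm ⟨0, h0⟩ := by
      rw [swapA_symm_apply]
      refine Equiv.swap_apply_of_ne_of_ne ?_ ?_
      · exact fun e => hi (by rw [← e, Equiv.apply_symm_apply])
      · exact fun e => hj (by rw [← e, Equiv.apply_symm_apply])
    rw [util_leaf h0 _ σ i hvi] at h1
    rw [util_leaf h0 _ (swapA σ i j) i (by rw [hτi]; exact hvj), hsz] at h1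
    exact lt_irrefl _ h1


lemma count_red : (Finset.univ.filter (fun i : A7 n => c7 n i = 0)).card = n - 2 := by
  have h : (Finset.univ.filter (fun i : A7 n => c7 n i = 0)) =
      Finset.univ.map ⟨Sum.inl, Sum.inl_injective⟩ := by
    ext (k | b) <;> simp only [Finset.mem_filter, Finset.mem_univ, true_and, Finset.mem_map,
      Function.Embedding.coeFn_mk] <;> simp [c7]
  rw [h, Finset.card_map, Finset.card_univ, Fintype.card_fin]

lemma count_red_nodes (σ : A7 n ≃ Fin n) :
    (Finset.univ.filter (fun w : Fin n => c7 n (σ.symm w) = 0)).card = n - 2 := by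
  rw [← count_red (n := n)]
  apply Finset.card_bij' (fun w _ => σ.symm w) (fun i _ => σ i) <;> simp

lemma SW_red_center (hn : 5 ≤ n) (h0 : 0 < n) (σ : A7 n ≃ Fin n)
    (h : c7 n (σ.symm ⟨0, h0⟩) = 0) :
    SW (Star n) (c7 n) σ = ((n : ℚ) - 3) + ((n : ℚ) - 3) / ((n : ℚ) - 1) := by
  set z : Fin n := ⟨0, h0⟩ with hzdef
  set i0 := σ.symm z with hi0
  have hσi0 : σ i0 = z := Equiv.apply_symm_apply σ z
  unfold SW
  rw [← Finset.sum_erase_add _ _ (Finset.mem_univ i0)]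
  have hleaf : ∀ i ∈ Finset.univ.erase i0,
      util (Star n) (c7 n) σ i = if c7 n (σ.symm z) = c7 n i then 1 else 0 := by
    intro i hi
    have hv : ((σ i : Fin n) : ℕ) ≠ 0 := by
      intro e
      exact (Finset.mem_erase.mp hi).1 (by rw [hi0, show z = σ i from by ext; exact e.symm,
        Equiv.symm_apply_apply])
    exact util_leaf h0 _ _ _ hv
  rw [Finset.sum_congr rfl hleaf, Finset.sum_boole, Finset.filter_erase,
    Finset.card_erase_of_mem (by simp [h]; exact h),
    util_center h0 _ _ _ hσi0, Finset.filter_erase,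
    Finset.card_erase_of_mem (by simp [h]; exact h)]
  have e1 : (Finset.univ.filter (fun i : A7 n => c7 n (σ.symm z) = c7 n i)).card = n - 2 := by
    rw [show (Finset.univ.filter (fun i : A7 n => c7 n (σ.symm z) = c7 n i)) =
        (Finset.univ.filter (fun i : A7 n => c7 n i = 0)) from
      Finset.filter_congr (fun i _ => by rw [h]; exact eq_comm), count_red]
  have e2 : (Finset.univ.filter (fun w : Fin n => c7 n (σ.symm w) = c7 n i0)).card = n - 2 := by
    rw [show (Finset.univ.filter (fun w : Fin n => c7 n (σ.symm w) = c7 n i0)) =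
        (Finset.univ.filter (fun w : Fin n => c7 n (σ.symm w) = 0)) from
      Finset.filter_congr (fun w _ => by rw [show c7 n i0 = 0 from h]), count_red_nodes σ]
  rw [e1, e2]
  have c1 : ((n - 2 - 1 : ℕ) : ℚ) = (n : ℚ) - 3 := by
    rw [show n - 2 - 1 = n - 3 from by omega, Nat.cast_sub (by omega)]
    norm_num
  have c2 : ((n - 1 : ℕ) : ℚ) = (n : ℚ) - 1 := by
    rw [Nat.cast_sub (by omega)]
    norm_num
  rw [c1, c2]

lemma SW_sigB (hn : 5 ≤ n) : SW (Star n) (c7 n) (sigB hn) = 1 + 1 / ((n : ℚ) - 1) := by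
  have h0 : 0 < n := by omega
  unfold SW
  rw [Fintype.sum_sum_type]
  have hred : ∀ k : Fin (n - 2), util (Star n) (c7 n) (sigB hn) (Sum.inl k) = 0 := by
    intro k
    rw [util_leaf h0 _ _ _ (show ((sigB hn (Sum.inl k) : Fin n) : ℕ) ≠ 0 from by
      show (k : ℕ) + 2 ≠ 0; omega), sigB_symm_zero hn h0]
    rw [if_neg (show c7 n (Sum.inr (0 : Fin 2)) ≠ c7 n (Sum.inl k) from by simp [c7])]
  rw [Finset.sum_congr rfl (fun k _ => hred k), Finset.sum_const, smul_zero,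
    Fin.sum_univ_two]
  have hc : sigB hn (Sum.inr 0) = ⟨0, h0⟩ := rfl
  rw [util_center h0 _ _ _ hc]
  have hfilter : (Finset.univ.erase (⟨0, h0⟩ : Fin n)).filter
      (fun w => c7 n ((sigB hn).symm w) = c7 n (Sum.inr 0)) = {(⟨1, by omega⟩ : Fin n)} := by
    ext w
    simp only [Finset.mem_filter, Finset.mem_erase, Finset.mem_univ, true_and,
      Finset.mem_singleton, sigB_color hn w, and_true]
    constructor
    · rintro ⟨hw, hcol⟩
      replace hcol : (if (w : ℕ) < 2 then (1 : Fin 2) else 0) = 1 := hcol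
      have h2 : (w : ℕ) < 2 := by
        by_contra h2
        rw [if_neg h2] at hcol
        exact absurd hcol (by decide)
      have hne : (w : ℕ) ≠ 0 := fun e => hw (Fin.ext e)
      exact Fin.ext (show (w : ℕ) = 1 by omega)
    · rintro rfl
      refine ⟨fun e => ?_, ?_⟩
      · have h1 := congrArg Fin.val e
        simp only [Fin.val_mk] at h1
        exact absurd h1 one_ne_zero
      · show (if (1 : ℕ) < 2 then (1 : Fin 2) else 0) = c7 n (Sum.inr 0)
        rw [if_pos (by omega)]
        rfl
  rw [hfilter, Finset.card_singleton]
  have hval : ((sigB hn (Sum.inr 1) : Fin n) : ℕ) ≠ 0 := by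
    show ((1 : Fin 2) : ℕ) ≠ 0
    decide
  rw [util_leaf h0 _ _ _ hval, sigB_symm_zero hn h0,
    if_pos (show c7 n (Sum.inr (0 : Fin 2)) = c7 n (Sum.inr 1) from rfl)]
  have c2 : ((n - 1 : ℕ) : ℚ) = (n : ℚ) - 1 := by
    rw [Nat.cast_sub (by omega)]
    norm_num
  rw [c2]
  push_cast
  ring

end Aux


/-- for every `n ≥ 5`, the 2-swap game with `n − 2` strategic red agents
and `2` strategic blue agents on the `n`-node star admits an equilibrium with a blue
agent at the center, of social welfare `1 + 1/(n−1) ≤ 2`, while every assignment with a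
red agent at the center has social welfare `n − 3 + (n−3)/(n−1) ≥ n − 3`; hence the
social price of anarchy of 2-swap games with only strategic agents and at least two
agents per type is at least `(n−3)/2 = Ω(n)`. -/
theorem star_poa_lower_bound (n : ℕ) (hn : 5 ≤ n) :
    (∃ σ : A7 n ≃ Fin n, c7 n (σ.symm ⟨0, by omega⟩) = 1 ∧
        isEquilibrium (Star n) (c7 n) σ ∧
        SW (Star n) (c7 n) σ = 1 + 1 / ((n : ℚ) - 1)) ∧
    (1 + 1 / ((n : ℚ) - 1) ≤ 2) ∧
    (∀ σ : A7 n ≃ Fin n, c7 n (σ.symm ⟨0, by omega⟩) = 0 →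
        SW (Star n) (c7 n) σ = ((n : ℚ) - 3) + ((n : ℚ) - 3) / ((n : ℚ) - 1)) ∧
    ((n : ℚ) - 3 ≤ ((n : ℚ) - 3) + ((n : ℚ) - 3) / ((n : ℚ) - 1)) ∧
    (∃ σ σ' : A7 n ≃ Fin n, isEquilibrium (Star n) (c7 n) σ ∧
        ((n : ℚ) - 3) / 2 * SW (Star n) (c7 n) σ ≤ SW (Star n) (c7 n) σ') := by
  have h0 : 0 < n := by omega
  have hq : (5 : ℚ) ≤ (n : ℚ) := by exact_mod_cast hn
  have h1 : (0 : ℚ) < (n : ℚ) - 1 := by linarith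
  have hdiv : (0 : ℚ) < 1 / ((n : ℚ) - 1) := by positivity
  refine ⟨⟨sigB hn, ?_, sigB_equilibrium hn, SW_sigB hn⟩, ?_, ?_, ?_, ?_⟩
  · rw [sigB_symm_zero hn h0]
    rfl
  · have h2 : 1 / ((n : ℚ) - 1) ≤ 1 := by
      rw [div_le_one h1]
      linarith
    linarith
  · intro σ hσ
    exact SW_red_center hn h0 σ hσ
  · have h3 : (0 : ℚ) ≤ ((n : ℚ) - 3) / ((n : ℚ) - 1) := div_nonneg (by linarith) h1.le
    linarith
  · refine ⟨sigB hn, sigR hn, sigB_equilibrium hn, ?_⟩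
    rw [SW_sigB hn, SW_red_center hn h0 (sigR hn) (by rw [sigR_symm_zero hn h0]; rfl)]
    have key : ((n : ℚ) - 3) + ((n : ℚ) - 3) / ((n : ℚ) - 1)
        = ((n : ℚ) - 3) * (1 + 1 / ((n : ℚ) - 1)) := by
      field_simp
    rw [key]
    exact mul_le_mul_of_nonneg_right (by linarith) (by linarith)


end SwapGame
end
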